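/- Let 𝔸 ⊆ ℝ^ℓ be a set whose linear span is all of ℝ^ℓ, let D, D′ : ℝ^ℓ → ℝⁿ be linear maps, and let P : ℝ^ℓ → ℝ^ℓ be the orthogonal projection onto the orthogonal complement of the kernel of D. Then D′(𝔸) = D(𝔸) if and only if there exists a linear map U : ℝ^ℓ → ℝ^ℓ such that D′ = D ∘ U and P(U(𝔸)) = P(𝔸). -/

import Mathlib

open MeasureTheory Metric Set

noncomputable section

/-- `Euc n` is the Euclidean space `ℝⁿ`. -/
abbrev Euc (n : ℕ) : Type := EuclideanSpace ℝ (Fin n)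

/-- A state space of linear dimension `ℓ`: a compact convex set contained in (and affinely
spanning) an affine hyperplane not through the origin, here written as `{x | f x = 1}`
for a nonzero linear functional `f`. -/
def IsStateSpace {ℓ : ℕ} (𝕊 : Set (Euc ℓ)) : Prop :=
  IsCompact 𝕊 ∧ Convex ℝ 𝕊 ∧
    ∃ f : Euc ℓ →ₗ[ℝ] ℝ, f ≠ 0 ∧
      (affineSpan ℝ 𝕊 : Set (Euc ℓ)) = {x | f x = 1}

/-- `R` is admissible for the data set `X` (w.r.t. the state space `𝕊`): it is the image of `𝕊`
under some linear map and satisfies `X ⊆ R ⊆ aff X`. -/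
def Admissible {ℓ n : ℕ} (𝕊 : Set (Euc ℓ)) (X R : Set (Euc n)) : Prop :=
  (∃ M : Euc ℓ →ₗ[ℝ] Euc n, R = M '' 𝕊) ∧ X ⊆ R ∧ R ⊆ (affineSpan ℝ X : Set (Euc n))

/-- Data-driven inference: the admissible sets for `X` of minimal `d`-dimensional Hausdorff
measure, where `d = dim aff X`. -/
def ddi {ℓ n : ℕ} (X : Set (Euc n)) (𝕊 : Set (Euc ℓ)) : Set (Set (Euc n)) :=
  {R | Admissible 𝕊 X R ∧ ∀ R' : Set (Euc n), Admissible 𝕊 X R' →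
      μH[(Module.finrank ℝ (affineSpan ℝ X).direction : ℝ)] R ≤
        μH[(Module.finrank ℝ (affineSpan ℝ X).direction : ℝ)] R'}

/-- A (hyper)-ellipsoid state space in `ℝ^ℓ`: the image of the closed unit ball of `ℝ^(ℓ-1)`
under an injective affine map. -/
def IsHyperEllipsoid {ℓ : ℕ} (𝕊 : Set (Euc ℓ)) : Prop :=
  ∃ F : Euc (ℓ - 1) →ᵃ[ℝ] Euc ℓ, Function.Injective F ∧ 𝕊 = F '' closedBall 0 1

theorem stmt_5 {ℓ n : ℕ} (𝔸 : Set (Euc ℓ)) (hspan : Submodule.span ℝ 𝔸 = ⊤)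
    (D D' : Euc ℓ →ₗ[ℝ] Euc n) (P : Euc ℓ →ₗ[ℝ] Euc ℓ)
    (hP : ∀ x : Euc ℓ, P x = (Submodule.orthogonalProjectionOnto (LinearMap.ker D)ᗮ x : Euc ℓ)) :
    D' '' 𝔸 = D '' 𝔸 ↔
      ∃ U : Euc ℓ →ₗ[ℝ] Euc ℓ, D' = D ∘ₗ U ∧ P '' (U '' 𝔸) = P '' 𝔸 := by
  -- P kills the kernel of D
  have hP0 : ∀ z ∈ LinearMap.ker D, P z = 0 := by
    intro z hz
    have hz' : z ∈ ((LinearMap.ker D)ᗮ)ᗮ :=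
      Submodule.le_orthogonal_orthogonal (LinearMap.ker D) hz
    have h0 := Submodule.orthogonalProjectionOnto_apply_of_mem_orthogonal hz'
    rw [hP, h0, ZeroMemClass.coe_zero]
  -- P x = P y whenever D x = D y
  have hPeq : ∀ x y : Euc ℓ, D x = D y → P x = P y := by
    intro x y hxy
    have : P (x - y) = 0 := hP0 _ (by simp [LinearMap.mem_ker, map_sub, hxy])
    exact sub_eq_zero.mp (by simpa [map_sub] using this)
  -- D (P x) = D x
  have hDP : ∀ x, D (P x) = D x := by
    intro x
    have h1 : x - (Submodule.orthogonalProjectionOnto (LinearMap.ker D)ᗮ x : Euc ℓ)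
        ∈ ((LinearMap.ker D)ᗮ)ᗮ := Submodule.sub_starProjection_mem_orthogonal x
    rw [Submodule.orthogonal_orthogonal] at h1
    have h2 : D x - D (P x) = 0 := by rw [hP]; rw [LinearMap.mem_ker, map_sub] at h1; exact h1
    exact (sub_eq_zero.mp h2).symm
  -- P fixes (ker D)ᗮ
  have hPmem : ∀ x ∈ (LinearMap.ker D)ᗮ, P x = x := by
    intro x hx
    rw [hP]
    exact Submodule.starProjection_eq_self_iff.mpr hx
  constructor
  · -- forward direction
    intro h
    -- left inverse of D restricted to (ker D)ᗮ
    have hinj : LinearMap.ker (D ∘ₗ (LinearMap.ker D)ᗮ.subtype) = ⊥ := by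
      rw [Submodule.eq_bot_iff]
      rintro ⟨x, hxK⟩ hx
      have hxker : x ∈ LinearMap.ker D := by simpa using hx
      have hx0 : x = 0 :=
        Submodule.disjoint_def.mp ((LinearMap.ker D).orthogonal_disjoint) x hxker hxK
      simp [hx0]
    obtain ⟨g, hg⟩ := (D ∘ₗ (LinearMap.ker D)ᗮ.subtype).exists_leftInverse_of_injective hinj
    set U : Euc ℓ →ₗ[ℝ] Euc ℓ := ((LinearMap.ker D)ᗮ.subtype ∘ₗ g) ∘ₗ D' with hU
    have hUmem : ∀ x, U x ∈ (LinearMap.ker D)ᗮ := fun x => (g (D' x)).2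
    -- if D' x = D y then U x = P y
    have hUP : ∀ x y, D' x = D y → U x = P y := by
      intro x y hxy
      have hPyK : P y ∈ (LinearMap.ker D)ᗮ := by
        rw [hP]; exact (Submodule.orthogonalProjectionOnto (LinearMap.ker D)ᗮ y).2
      have heq : D' x = (D ∘ₗ (LinearMap.ker D)ᗮ.subtype) ⟨P y, hPyK⟩ := by
        simp [LinearMap.comp_apply, hDP, hxy]
      have hgx : g (D' x) = ⟨P y, hPyK⟩ := by
        rw [heq, ← LinearMap.comp_apply, hg, LinearMap.id_apply]
      simp [hU, LinearMap.comp_apply, hgx]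
    -- range D' ≤ range D
    have hrange : ∀ x, ∃ y, D y = D' x := by
      intro x
      have h1 : D' x ∈ Submodule.map D' ⊤ := ⟨x, trivial, rfl⟩
      rw [← hspan, Submodule.map_span] at h1
      have h2 : Submodule.span ℝ (D' '' 𝔸) ≤ LinearMap.range D := by
        rw [h, Submodule.span_le]
        rintro _ ⟨a, _, rfl⟩
        exact ⟨a, rfl⟩
      obtain ⟨y, hy⟩ := h2 h1
      exact ⟨y, hy⟩
    have hDU : ∀ x, D (U x) = D' x := by
      intro x
      obtain ⟨y, hy⟩ := hrange x
      rw [hUP x y hy.symm, hDP, hy]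
    refine ⟨U, LinearMap.ext fun x => (hDU x).symm, ?_⟩
    apply Set.Subset.antisymm
    · rintro _ ⟨_, ⟨a, ha, rfl⟩, rfl⟩
      have : D' a ∈ D '' 𝔸 := h ▸ ⟨a, ha, rfl⟩
      obtain ⟨b, hb, hDb⟩ := this
      have h1 : U a = P b := hUP a b hDb.symm
      have h2 : P (U a) = U a := hPmem _ (hUmem a)
      exact ⟨b, hb, by rw [← h1, h2]⟩
    · rintro _ ⟨a, ha, rfl⟩
      have : D a ∈ D' '' 𝔸 := h.symm ▸ ⟨a, ha, rfl⟩
      obtain ⟨b, hb, hDb⟩ := this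
      have : P (U b) = P a := hPeq _ _ (by rw [hDU, hDb])
      exact ⟨U b, ⟨b, hb, rfl⟩, this⟩
  · -- backward direction
    rintro ⟨U, rfl, hPU⟩
    have key : ∀ S : Set (Euc ℓ), D '' (P '' S) = D '' S := by
      intro S
      rw [Set.image_image]
      exact Set.image_congr fun x _ => hDP x
    calc (D ∘ₗ U) '' 𝔸 = D '' (U '' 𝔸) := by
          rw [Set.image_image]; exact Set.image_congr fun x _ => rfl
      _ = D '' (P '' (U '' 𝔸)) := (key _).symm
      _ = D '' (P '' 𝔸) := by rw [hPU]
      _ = D '' 𝔸 := key _
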